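/- Let a, b ≥ 1, let P ∈ ℤ[y_1,…,y_a] be a symmetric polynomial in a variables and Q ∈ ℤ[z_1,…,z_b] a symmetric polynomial in b variables. In the field of fractions of ℤ[x_1,…,x_{a+b}], consider Z(P,Q) := Σ_{I ⊔ J = {1,…,a+b}, |I| = a, |J| = b} P(x_I)·Q(x_J) / ∏_{j ∈ J} ∏_{i ∈ I} (x_j − x_i), where P(x_I) denotes P evaluated at the variables indexed by I (in any order, which is well defined by symmetry) and similarly for Q(x_J). Then Z(P,Q) is the image of a polynomial: there exists R ∈ ℤ[x_1,…,x_{a+b}], symmetric in all a+b variables, whose image in the fraction field equals Z(P,Q). -/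

import Mathlib

set_option synthInstance.maxHeartbeats 1000000
set_option maxHeartbeats 1600000

open MvPolynomial

/-- The cardinality of a member of `powersetCard a univ`. -/
theorem ZS.card_eq {n a : ℕ}
    (I : {s // s ∈ Finset.powersetCard a (Finset.univ : Finset (Fin n))}) :
    I.1.card = a :=
  (Finset.mem_powersetCard.mp I.2).2

/-- The cardinality of the complement of a member of `powersetCard a univ` in `Fin (a+b)`. -/
theorem ZS.card_compl_eq {a b : ℕ}
    (I : {s // s ∈ Finset.powersetCard a (Finset.univ : Finset (Fin (a + b)))}) :
    I.1ᶜ.card = b := by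
  have h := ZS.card_eq I
  simp [Finset.card_compl, h]

/-- Evaluation `P(x_I)` of a polynomial in `a` variables at the variables indexed by a subset
`I` of cardinality `a`, taken in increasing order (for symmetric `P` this is independent of
the order). -/
noncomputable def ZS.evalAt {n a : ℕ} (I : Finset (Fin n)) (h : I.card = a)
    (P : MvPolynomial (Fin a) ℤ) : MvPolynomial (Fin n) ℤ :=
  aeval (fun t : Fin a => X ((I.orderIsoOfFin h t : {x // x ∈ I}) : Fin n)) P

/-- The sum `Z(P,Q) = Σ_{I ⊔ J = {1,…,a+b}, |I| = a} P(x_I)·Q(x_J) / ∏_{j∈J} ∏_{i∈I} (x_j - x_i)`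
in the fraction field of `ℤ[x_1,…,x_{a+b}]`. -/
noncomputable def ZS (a b : ℕ) (P : MvPolynomial (Fin a) ℤ) (Q : MvPolynomial (Fin b) ℤ) :
    FractionRing (MvPolynomial (Fin (a + b)) ℤ) :=
  ∑ I ∈ (Finset.powersetCard a (Finset.univ : Finset (Fin (a + b)))).attach,
    (algebraMap (MvPolynomial (Fin (a + b)) ℤ) (FractionRing (MvPolynomial (Fin (a + b)) ℤ))
        (ZS.evalAt I.1 (ZS.card_eq I) P) *
      algebraMap (MvPolynomial (Fin (a + b)) ℤ) (FractionRing (MvPolynomial (Fin (a + b)) ℤ))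
        (ZS.evalAt I.1ᶜ (ZS.card_compl_eq I) Q)) /
      ∏ j ∈ I.1ᶜ, ∏ i ∈ I.1,
        algebraMap (MvPolynomial (Fin (a + b)) ℤ) (FractionRing (MvPolynomial (Fin (a + b)) ℤ))
          (X j - X i)

namespace ZSAux

/-! ### Primality of `X j - X i` -/

lemma primeX {n : ℕ} (j : Fin n) : Prime (X j : MvPolynomial (Fin n) ℤ) := by
  have h2 : Prime (X PUnit.unit : MvPolynomial PUnit ℤ) := by
    rw [← MulEquiv.prime_iff (MvPolynomial.pUnitAlgEquiv ℤ).toMulEquiv]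
    simpa using (Polynomial.prime_X : Prime (Polynomial.X : Polynomial ℤ))
  have h3 : Prime (X (⟨j, rfl⟩ : ({j} : Set (Fin n))) : MvPolynomial ({j} : Set (Fin n)) ℤ) := by
    have := (MulEquiv.prime_iff (renameEquiv ℤ (Equiv.equivPUnit.{_,1} ({j} : Set (Fin n))).symm).toMulEquiv
      (p := (X PUnit.unit : MvPolynomial PUnit ℤ))).2 h2
    simpa using this
  have h4 := (prime_rename_iff (R := ℤ) ({j} : Set (Fin n))
      (p := X (⟨j, rfl⟩ : ({j} : Set (Fin n))))).2 h3
  simpa using h4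

noncomputable def shear {n : ℕ} (i j : Fin n) (hij : i ≠ j) :
    MvPolynomial (Fin n) ℤ ≃ₐ[ℤ] MvPolynomial (Fin n) ℤ :=
  AlgEquiv.ofAlgHom
    (aeval (fun k => if k = j then X j - X i else X k))
    (aeval (fun k => if k = j then X j + X i else X k))
    (by ext k : 1; rcases eq_or_ne k j with rfl | h <;> simp [*, sub_add_cancel])
    (by ext k : 1; rcases eq_or_ne k j with rfl | h <;> simp [*])

lemma primeXsub {n : ℕ} {i j : Fin n} (hij : i ≠ j) :
    Prime (X j - X i : MvPolynomial (Fin n) ℤ) := by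
  have := (MulEquiv.prime_iff (shear i j hij).toMulEquiv (p := (X j : MvPolynomial (Fin n) ℤ))).2 (primeX j)
  simpa [shear] using this

/-! ### Substitution and divisibility by `X j - X i` -/

noncomputable def subst {n : ℕ} (i j : Fin n) :
    MvPolynomial (Fin n) ℤ →ₐ[ℤ] MvPolynomial (Fin n) ℤ :=
  aeval (fun k => if k = j then X i else X k)

lemma dvd_of_subst_eq_zero {n : ℕ} (i j : Fin n) (p : MvPolynomial (Fin n) ℤ)
    (h : subst i j p = 0) : (X j - X i : MvPolynomial (Fin n) ℤ) ∣ p := by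
  rw [← Ideal.mem_span_singleton]
  set Q := Ideal.Quotient.mk (Ideal.span {(X j - X i : MvPolynomial (Fin n) ℤ)}) with hQ
  have key : Q.comp (subst i j).toRingHom = Q := by
    apply MvPolynomial.ringHom_ext
    · intro r; simp [subst]
    · intro k
      rcases eq_or_ne k j with rfl | hk
      · simp only [RingHom.comp_apply, AlgHom.toRingHom_eq_coe, AlgHom.coe_toRingHom, subst,
          aeval_X, if_pos rfl]
        have h0 : Q (X k - X i) = 0 := (Ideal.Quotient.eq_zero_iff_mem).2 (Ideal.subset_span rfl)
        rw [RingHom.map_sub, sub_eq_zero] at h0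
        exact h0.symm
      · simp [subst, hk]
  have : Q p = Q ((subst i j) p) := by
    have := congrArg (fun f => f p) key
    simpa using this.symm
  rw [h, map_zero] at this
  exact (Ideal.Quotient.eq_zero_iff_mem).1 this

lemma subst_rename_swap {n : ℕ} (i j : Fin n) (p : MvPolynomial (Fin n) ℤ) :
    subst i j (rename (Equiv.swap i j) p) = subst i j p := by
  have key : (subst i j).comp (rename (Equiv.swap i j) : MvPolynomial (Fin n) ℤ →ₐ[ℤ] _)
      = subst i j := by
    apply MvPolynomial.algHom_ext
    intro k
    rcases eq_or_ne k j with rfl | hk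
    · simp [subst, Equiv.swap_apply_right]
    rcases eq_or_ne k i with rfl | hk2
    · simp [subst, Equiv.swap_apply_left, hk]
    · simp [subst, Equiv.swap_apply_of_ne_of_ne hk2 hk, hk]
  exact congrArg (fun f => f p) key

/-! ### The Vandermonde polynomial -/

noncomputable def vand (n : ℕ) : MvPolynomial (Fin n) ℤ :=
  (Matrix.vandermonde (fun i : Fin n => X i)).det

lemma vand_eq (n : ℕ) : vand n = ∏ i : Fin n, ∏ j ∈ Finset.Ioi i, (X j - X i) := by
  rw [vand, Matrix.det_vandermonde]

lemma rename_vand {n : ℕ} (σ : Equiv.Perm (Fin n)) :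
    rename σ (vand n) = (Equiv.Perm.sign σ : ℤ) • vand n := by
  have h1 : rename (R := ℤ) σ (vand n)
      = ((Matrix.vandermonde (fun i : Fin n => X i)).map (rename (R := ℤ) σ)).det := by
    rw [vand]
    exact AlgHom.map_det (rename (R := ℤ) σ : MvPolynomial (Fin n) ℤ →ₐ[ℤ] MvPolynomial (Fin n) ℤ)
      (Matrix.vandermonde fun i : Fin n => (X i : MvPolynomial (Fin n) ℤ))
  have h2 : ((Matrix.vandermonde (fun i : Fin n => X i)).map (rename (R := ℤ) σ))
      = (Matrix.vandermonde (fun i : Fin n => X i)).submatrix σ id := by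
    ext i j
    simp [Matrix.vandermonde, Matrix.map_apply, Matrix.submatrix_apply]
  rw [h1, h2, Matrix.det_permute, vand]
  rw [zsmul_eq_mul]

lemma vand_ne_zero (n : ℕ) : vand n ≠ 0 := by
  rw [vand_eq]
  apply Finset.prod_ne_zero_iff.2
  intro i _
  apply Finset.prod_ne_zero_iff.2
  intro j hj
  have : j ≠ i := (Finset.mem_Ioi.1 hj).ne'
  intro h
  rw [sub_eq_zero] at h
  exact this ((X_injective.eq_iff).1 h)

lemma denom_dvd_vand {n : ℕ} (I : Finset (Fin n)) :
    (∏ j ∈ Iᶜ, ∏ i ∈ I, (X j - X i : MvPolynomial (Fin n) ℤ)) ∣ vand n := by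
  classical
  rw [vand_eq]
  set T : Finset ((_ : Fin n) × Fin n) := Finset.univ.sigma (fun i => Finset.Ioi i) with hT
  have hvand : (∏ i : Fin n, ∏ j ∈ Finset.Ioi i, (X j - X i : MvPolynomial (Fin n) ℤ))
      = ∏ p ∈ T, (X p.2 - X p.1 : MvPolynomial (Fin n) ℤ) := by
    rw [hT, Finset.prod_sigma]
  have hD : (∏ j ∈ Iᶜ, ∏ i ∈ I, (X j - X i : MvPolynomial (Fin n) ℤ))
      = ∏ p ∈ Iᶜ ×ˢ I, (X p.1 - X p.2 : MvPolynomial (Fin n) ℤ) := by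
    rw [Finset.prod_product]
  set g : Fin n × Fin n → (_ : Fin n) × Fin n :=
    fun p => if p.2 < p.1 then ⟨p.2, p.1⟩ else ⟨p.1, p.2⟩ with hg
  have hginj : Set.InjOn g (Iᶜ ×ˢ I) := by
    intro p hp q hq hpq
    simp only [Finset.coe_product, Set.mem_prod, Finset.mem_coe, Finset.mem_compl] at hp hq
    have hp1 : p.1 ∉ I := hp.1
    have hp2 : p.2 ∈ I := hp.2
    have hq1 : q.1 ∉ I := hq.1
    have hq2 : q.2 ∈ I := hq.2
    simp only [hg] at hpq
    split_ifs at hpq with h1 h2 h2 <;>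
      · obtain ⟨h3, h4⟩ := Sigma.mk.inj_iff.1 hpq
        rw [heq_iff_eq] at h4
        first
        | exact Prod.ext h4 h3
        | exact Prod.ext h3 h4
        | (rw [h3] at hp2; exact absurd hp2 hq1)
        | (rw [h4] at hp2; exact absurd hp2 hq1)
  rw [hvand, hD]
  have step1 : (∏ p ∈ Iᶜ ×ˢ I, (X p.1 - X p.2 : MvPolynomial (Fin n) ℤ)) ∣
      ∏ p ∈ Iᶜ ×ˢ I, (X (g p).2 - X (g p).1 : MvPolynomial (Fin n) ℤ) := by
    apply Finset.prod_dvd_prod_of_dvd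
    intro p hp
    simp only [hg]
    split_ifs with h1
    · exact dvd_refl _
    · rw [show (X p.1 - X p.2 : MvPolynomial (Fin n) ℤ) = -(X p.2 - X p.1) by ring]
      exact (neg_dvd).2 dvd_rfl
  have step2 : (∏ p ∈ Iᶜ ×ˢ I, (X (g p).2 - X (g p).1 : MvPolynomial (Fin n) ℤ))
      = ∏ q ∈ (Iᶜ ×ˢ I).image g, (X q.2 - X q.1 : MvPolynomial (Fin n) ℤ) := by
    rw [Finset.prod_image (fun x hx y hy hxy => hginj (by simpa using hx) (by simpa using hy) hxy)]
  have step3 : (Iᶜ ×ˢ I).image g ⊆ T := by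
    intro q hq
    obtain ⟨p, hp, rfl⟩ := Finset.mem_image.1 hq
    rw [Finset.mem_product, Finset.mem_compl] at hp
    have hne : p.1 ≠ p.2 := fun h => hp.1 (h ▸ hp.2)
    simp only [hg, hT]
    split_ifs with h1
    · simp [Finset.mem_sigma, Finset.mem_Ioi, h1]
    · have : p.1 < p.2 := lt_of_le_of_ne (not_lt.1 h1) hne
      simp [Finset.mem_sigma, Finset.mem_Ioi, this]
  calc (∏ p ∈ Iᶜ ×ˢ I, (X p.1 - X p.2 : MvPolynomial (Fin n) ℤ))
      ∣ ∏ q ∈ (Iᶜ ×ˢ I).image g, (X q.2 - X q.1 : MvPolynomial (Fin n) ℤ) := step2 ▸ step1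
    _ ∣ ∏ p ∈ T, (X p.2 - X p.1 : MvPolynomial (Fin n) ℤ) :=
        Finset.prod_dvd_prod_of_subset _ _ _ step3

/-! ### Renaming `evalAt` -/

lemma rename_evalAt {n a : ℕ} (σ : Equiv.Perm (Fin n)) (I : Finset (Fin n)) (h : I.card = a)
    (h' : (I.image σ).card = a) (P : MvPolynomial (Fin a) ℤ) (hP : P.IsSymmetric) :
    rename σ (ZS.evalAt I h P) = ZS.evalAt (I.image σ) h' P := by
  have hmem : ∀ x : Fin n, x ∈ I ↔ σ x ∈ I.image σ := by
    intro x
    constructor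
    · exact fun hx => Finset.mem_image_of_mem σ hx
    · intro hx
      obtain ⟨y, hy, hxy⟩ := Finset.mem_image.1 hx
      rwa [← σ.injective hxy]
  set E : {x // x ∈ I} ≃ {y // y ∈ I.image σ} := σ.subtypeEquiv hmem with hE
  set π : Fin a ≃ Fin a :=
    (I.orderIsoOfFin h).toEquiv.trans (E.trans ((I.image σ).orderIsoOfFin h').toEquiv.symm)
    with hπ
  have key : ∀ t : Fin a,
      σ ((I.orderIsoOfFin h t : {x // x ∈ I}) : Fin n)
        = (((I.image σ).orderIsoOfFin h' (π t) : {y // y ∈ I.image σ}) : Fin n) := by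
    intro t
    simp [hπ, hE, Equiv.subtypeEquiv]
  have lhs : rename σ (ZS.evalAt I h P)
      = aeval (fun t : Fin a => X (σ ((I.orderIsoOfFin h t : {x // x ∈ I}) : Fin n))
          : Fin a → MvPolynomial (Fin n) ℤ) P := by
    rw [ZS.evalAt]
    have := congrArg (fun f : MvPolynomial (Fin a) ℤ →ₐ[ℤ] MvPolynomial (Fin n) ℤ => f P)
      (MvPolynomial.comp_aeval
        (f := fun t : Fin a => (X ((I.orderIsoOfFin h t : {x // x ∈ I}) : Fin n)
          : MvPolynomial (Fin n) ℤ))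
        (φ := (rename σ : MvPolynomial (Fin n) ℤ →ₐ[ℤ] MvPolynomial (Fin n) ℤ)))
    simp only [AlgHom.comp_apply] at this
    rw [this]
    simp
  rw [lhs]
  have : (fun t : Fin a => (X (σ ((I.orderIsoOfFin h t : {x // x ∈ I}) : Fin n))
        : MvPolynomial (Fin n) ℤ))
      = (fun t : Fin a => (X ((((I.image σ).orderIsoOfFin h' t : {y // y ∈ I.image σ}) : Fin n))
        : MvPolynomial (Fin n) ℤ)) ∘ π := by
    funext t
    have := key t
    simp only [Function.comp]
    simpa using congrArg (X : Fin n → MvPolynomial (Fin n) ℤ) this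
  rw [this, ← aeval_rename, hP π, ZS.evalAt]

/-! ### The field automorphism induced by a permutation -/

noncomputable def fe {n : ℕ} (σ : Equiv.Perm (Fin n)) :
    FractionRing (MvPolynomial (Fin n) ℤ) ≃+* FractionRing (MvPolynomial (Fin n) ℤ) :=
  IsFractionRing.ringEquivOfRingEquiv (renameEquiv ℤ σ).toRingEquiv

lemma fe_alg {n : ℕ} (σ : Equiv.Perm (Fin n)) (p : MvPolynomial (Fin n) ℤ) :
    fe σ (algebraMap _ (FractionRing (MvPolynomial (Fin n) ℤ)) p)
      = algebraMap _ (FractionRing (MvPolynomial (Fin n) ℤ)) (rename σ p) := by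
  simp [fe]

lemma evalAt_congr {n a : ℕ} {s t : Finset (Fin n)} (hst : s = t) (h : s.card = a)
    (h' : t.card = a) (P : MvPolynomial (Fin a) ℤ) :
    ZS.evalAt s h P = ZS.evalAt t h' P := by
  subst hst; rfl

lemma image_compl {n : ℕ} (σ : Equiv.Perm (Fin n)) (I : Finset (Fin n)) :
    Iᶜ.image σ = (I.image σ)ᶜ := by
  ext x
  simp only [Finset.mem_image, Finset.mem_compl]
  constructor
  · rintro ⟨y, hy, rfl⟩ ⟨z, hz, hzy⟩
    exact hy (σ.injective hzy ▸ hz)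
  · intro hx
    refine ⟨σ.symm x, fun hmem => hx ⟨σ.symm x, hmem, by simp⟩, by simp⟩

/-- The induced map on index subsets. -/
noncomputable def mapSet {n a : ℕ} (σ : Equiv.Perm (Fin n))
    (I : {s // s ∈ Finset.powersetCard a (Finset.univ : Finset (Fin n))}) :
    {s // s ∈ Finset.powersetCard a (Finset.univ : Finset (Fin n))} :=
  ⟨I.1.image σ, Finset.mem_powersetCard.2 ⟨Finset.subset_univ _, by
    rw [Finset.card_image_of_injective _ σ.injective]; exact ZS.card_eq I⟩⟩

lemma mapSet_inv {n a : ℕ} (σ : Equiv.Perm (Fin n))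
    (I : {s // s ∈ Finset.powersetCard a (Finset.univ : Finset (Fin n))}) :
    mapSet σ (mapSet σ.symm I) = I := by
  apply Subtype.ext
  simp only [mapSet, Finset.image_image]
  rw [show (⇑σ ∘ ⇑σ.symm) = id from funext (fun x => σ.apply_symm_apply x), Finset.image_id]

lemma fe_ZS (a b : ℕ) (σ : Equiv.Perm (Fin (a + b)))
    (P : MvPolynomial (Fin a) ℤ) (hP : P.IsSymmetric)
    (Q : MvPolynomial (Fin b) ℤ) (hQ : Q.IsSymmetric) :
    fe σ (ZS a b P Q) = ZS a b P Q := by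
  classical
  let alg := algebraMap (MvPolynomial (Fin (a + b)) ℤ) (FractionRing (MvPolynomial (Fin (a + b)) ℤ))
  rw [ZS, map_sum]
  refine Finset.sum_bij (fun I _ => mapSet σ I) (fun I _ => Finset.mem_attach _ _)
    ?_ ?_ ?_
  · intro I _ J _ hIJ
    have := congrArg (mapSet σ.symm) hIJ
    have h1 : ∀ (I : {s // s ∈ Finset.powersetCard a (Finset.univ : Finset (Fin (a + b)))}),
        mapSet σ.symm (mapSet σ I) = I := by
      intro I
      have := mapSet_inv σ.symm I
      simpa using this
    rwa [h1, h1] at this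
  · intro J _
    exact ⟨mapSet σ.symm J, Finset.mem_attach _ _, mapSet_inv σ J⟩
  · intro I _
    have hcard : (I.1.image σ).card = a := ZS.card_eq (mapSet σ I)
    have hcardc : ((I.1.image σ)ᶜ).card = b := by
      rw [Finset.card_compl, hcard]; simp
    have hcardc' : (I.1ᶜ.image σ).card = b := by rw [image_compl]; exact hcardc
    rw [map_div₀, map_mul]
    have hnum1 : fe σ (alg (ZS.evalAt I.1 (ZS.card_eq I) P))
        = alg (ZS.evalAt ((mapSet σ I).1) (ZS.card_eq (mapSet σ I)) P) := by
      rw [fe_alg, rename_evalAt σ I.1 (ZS.card_eq I) hcard P hP]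
      rfl
    have hnum2 : fe σ (alg (ZS.evalAt I.1ᶜ (ZS.card_compl_eq I) Q))
        = alg (ZS.evalAt ((mapSet σ I).1)ᶜ (ZS.card_compl_eq (mapSet σ I)) Q) := by
      rw [fe_alg, rename_evalAt σ I.1ᶜ (ZS.card_compl_eq I) hcardc' Q hQ]
      rw [evalAt_congr (image_compl σ I.1) hcardc' hcardc Q]
      rfl
    have hden : fe σ (∏ j ∈ I.1ᶜ, ∏ i ∈ I.1, alg (X j - X i))
        = ∏ j ∈ ((mapSet σ I).1)ᶜ, ∏ i ∈ (mapSet σ I).1, alg (X j - X i) := by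
      rw [map_prod]
      have : ∀ j, fe σ (∏ i ∈ I.1, alg (X j - X i)) = ∏ i ∈ I.1, alg (X (σ j) - X (σ i)) := by
        intro j
        rw [map_prod]
        apply Finset.prod_congr rfl
        intro i _
        rw [fe_alg]
        congr 1
        simp
      calc ∏ j ∈ I.1ᶜ, fe σ (∏ i ∈ I.1, alg (X j - X i))
          = ∏ j ∈ I.1ᶜ, ∏ i ∈ I.1, alg (X (σ j) - X (σ i)) :=
            Finset.prod_congr rfl (fun j _ => this j)
        _ = ∏ j ∈ I.1ᶜ.image σ, ∏ i ∈ I.1.image σ, alg (X j - X i) := by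
            rw [Finset.prod_image (fun x _ y _ h => σ.injective h)]
            apply Finset.prod_congr rfl
            intro j _
            rw [Finset.prod_image (fun x _ y _ h => σ.injective h)]
        _ = ∏ j ∈ ((mapSet σ I).1)ᶜ, ∏ i ∈ (mapSet σ I).1, alg (X j - X i) := by
            rw [image_compl]
            rfl
    rw [hnum1, hnum2, hden]


/-! ### Product of pairwise non-associated primes divides -/

lemma prod_primes_dvd {R : Type*} [CommRing R] [IsDomain R] {ι : Type*} [DecidableEq ι]
    (s : Finset ι) (f : ι → R) (N : R)
    (hp : ∀ i ∈ s, Prime (f i)) (hd : ∀ i ∈ s, f i ∣ N)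
    (hna : ∀ i ∈ s, ∀ j ∈ s, i ≠ j → ¬ Associated (f i) (f j)) :
    (∏ i ∈ s, f i) ∣ N := by
  classical
  induction s using Finset.cons_induction with
  | empty => simpa using one_dvd N
  | cons a s ha ih =>
    have hprod : (∏ i ∈ s, f i) ∣ N :=
      ih (fun i hi => hp i (Finset.mem_cons_of_mem hi))
        (fun i hi => hd i (Finset.mem_cons_of_mem hi))
        (fun i hi j hj hij => hna i (Finset.mem_cons_of_mem hi) j (Finset.mem_cons_of_mem hj) hij)
    obtain ⟨M, hM⟩ := hprod
    have hfa : f a ∣ N := hd a (Finset.mem_cons_self a s)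
    have hpa : Prime (f a) := hp a (Finset.mem_cons_self a s)
    have : f a ∣ (∏ i ∈ s, f i) * M := hM ▸ hfa
    rcases hpa.dvd_mul.1 this with h | h
    · exfalso
      obtain ⟨i, hi, hdvd⟩ := (hpa.dvd_finset_prod_iff f).1 h
      have : Associated (f a) (f i) :=
        hpa.associated_of_dvd (hp i (Finset.mem_cons_of_mem hi)) hdvd
      exact hna a (Finset.mem_cons_self a s) i (Finset.mem_cons_of_mem hi)
        (fun he => ha (he ▸ hi)) this
    · obtain ⟨M', hM'⟩ := h
      rw [Finset.prod_cons]
      exact ⟨M', by rw [hM, hM', mul_assoc, mul_left_comm]⟩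

/-! ### Pairwise non-associatedness of `X j - X i` for sorted pairs -/

lemma not_associated_Xsub {n : ℕ} {i j k l : Fin n} (hij : i < j) (hkl : k < l)
    (hne : (i, j) ≠ (k, l)) :
    ¬ Associated (X j - X i : MvPolynomial (Fin n) ℤ) (X l - X k) := by
  intro hassoc
  -- choose m ∈ {i, j} with m ∉ {k, l}
  have hm : ∃ m : Fin n, (m = i ∨ m = j) ∧ m ≠ k ∧ m ≠ l := by
    by_cases hik : i = k
    · subst hik
      have hjl : j ≠ l := fun h => hne (by rw [h])
      exact ⟨j, Or.inr rfl, fun h => absurd (h ▸ hij) (lt_irrefl _), hjl⟩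
    · by_cases hil : i = l
      · subst hil
        exact ⟨j, Or.inr rfl, fun h => absurd (h ▸ hkl) (not_lt.2 (le_of_lt hij)),
          fun h => absurd (h ▸ hij) (lt_irrefl _)⟩
      · exact ⟨i, Or.inl rfl, hik, hil⟩
  obtain ⟨m, hm1, hmk, hml⟩ := hm
  have hdvd : (X l - X k : MvPolynomial (Fin n) ℤ) ∣ (X j - X i) := hassoc.symm.dvd
  have := map_dvd (MvPolynomial.eval (fun t : Fin n => if t = m then (1 : ℤ) else 0)) hdvd
  rw [map_sub, map_sub, eval_X, eval_X, eval_X, eval_X, if_neg (Ne.symm hml),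
    if_neg (Ne.symm hmk), sub_zero, zero_dvd_iff, sub_eq_zero] at this
  rcases hm1 with rfl | rfl
  · have : (0 : ℤ) = 1 := by simpa [if_neg (ne_of_lt hij).symm] using this.symm
    exact absurd this (by norm_num)
  · have : (1 : ℤ) = 0 := by simpa [if_neg (ne_of_lt hij)] using this.symm
    exact absurd this (by norm_num)

lemma vand_dvd {n : ℕ} (N : MvPolynomial (Fin n) ℤ)
    (h : ∀ i j : Fin n, i < j → (X j - X i) ∣ N) : vand n ∣ N := by
  classical
  rw [vand_eq, Finset.prod_sigma']
  apply prod_primes_dvd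
  · intro p hp
    have : p.1 < p.2 := Finset.mem_Ioi.1 (Finset.mem_sigma.1 hp).2
    exact primeXsub (ne_of_lt this)
  · intro p hp
    exact h p.1 p.2 (Finset.mem_Ioi.1 (Finset.mem_sigma.1 hp).2)
  · intro p hp q hq hpq
    have h1 : p.1 < p.2 := Finset.mem_Ioi.1 (Finset.mem_sigma.1 hp).2
    have h2 : q.1 < q.2 := Finset.mem_Ioi.1 (Finset.mem_sigma.1 hq).2
    apply not_associated_Xsub h1 h2
    intro he
    apply hpq
    have e1 : p.1 = q.1 := congrArg Prod.fst he
    have e2 : p.2 = q.2 := congrArg Prod.snd he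
    obtain ⟨p1, p2⟩ := p
    obtain ⟨q1, q2⟩ := q
    cases e1
    cases e2
    rfl

lemma exists_N (a b : ℕ) (P : MvPolynomial (Fin a) ℤ) (Q : MvPolynomial (Fin b) ℤ) :
    ∃ N : MvPolynomial (Fin (a + b)) ℤ,
      algebraMap (MvPolynomial (Fin (a + b)) ℤ) (FractionRing (MvPolynomial (Fin (a + b)) ℤ)) N
        = ZS a b P Q *
          algebraMap (MvPolynomial (Fin (a + b)) ℤ) (FractionRing (MvPolynomial (Fin (a + b)) ℤ))
            (vand (a + b)) := by
  classical
  have hchoice : ∀ I : Finset (Fin (a + b)), ∃ C : MvPolynomial (Fin (a + b)) ℤ,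
      vand (a + b) = (∏ j ∈ Iᶜ, ∏ i ∈ I, (X j - X i : MvPolynomial (Fin (a + b)) ℤ)) * C :=
    fun I => denom_dvd_vand I
  choose C hC using hchoice
  refine ⟨∑ I ∈ (Finset.powersetCard a (Finset.univ : Finset (Fin (a + b)))).attach,
    ZS.evalAt I.1 (ZS.card_eq I) P * ZS.evalAt I.1ᶜ (ZS.card_compl_eq I) Q * C I.1, ?_⟩
  rw [map_sum, ZS, Finset.sum_mul]
  apply Finset.sum_congr rfl
  intro I _
  have hprod : (∏ j ∈ I.1ᶜ, ∏ i ∈ I.1,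
        algebraMap (MvPolynomial (Fin (a + b)) ℤ) (FractionRing (MvPolynomial (Fin (a + b)) ℤ))
          (X j - X i))
      = algebraMap (MvPolynomial (Fin (a + b)) ℤ) (FractionRing (MvPolynomial (Fin (a + b)) ℤ))
          (∏ j ∈ I.1ᶜ, ∏ i ∈ I.1, (X j - X i : MvPolynomial (Fin (a + b)) ℤ)) := by
    rw [map_prod]
    apply Finset.prod_congr rfl
    intro j _
    rw [map_prod]
  have hDne : (∏ j ∈ I.1ᶜ, ∏ i ∈ I.1, (X j - X i : MvPolynomial (Fin (a + b)) ℤ)) ≠ 0 := by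
    apply Finset.prod_ne_zero_iff.2
    intro j hj
    apply Finset.prod_ne_zero_iff.2
    intro i hi
    have hne : j ≠ i := by
      intro h
      rw [Finset.mem_compl] at hj
      exact hj (h ▸ hi)
    intro h
    rw [sub_eq_zero] at h
    exact hne (X_injective.eq_iff.1 h)
  have hDK : algebraMap (MvPolynomial (Fin (a + b)) ℤ)
      (FractionRing (MvPolynomial (Fin (a + b)) ℤ))
      (∏ j ∈ I.1ᶜ, ∏ i ∈ I.1, (X j - X i : MvPolynomial (Fin (a + b)) ℤ)) ≠ 0 :=
    fun h => hDne (IsFractionRing.injective (MvPolynomial (Fin (a + b)) ℤ)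
      (FractionRing (MvPolynomial (Fin (a + b)) ℤ)) (by rw [h, map_zero]))
  rw [hprod, map_mul, map_mul, hC I.1, map_mul]
  have key : ∀ (x d c : FractionRing (MvPolynomial (Fin (a + b)) ℤ)), d ≠ 0 →
      x / d * (d * c) = x * c := by
    intro x d c hd
    field_simp
  rw [key _ _ _ hDK, mul_assoc]

end ZSAux

set_option synthInstance.maxHeartbeats 800000 in
set_option maxHeartbeats 1600000 in
theorem ZS_is_polynomial' (a b : ℕ)
    (P : MvPolynomial (Fin a) ℤ) (hP : P.IsSymmetric)
    (Q : MvPolynomial (Fin b) ℤ) (hQ : Q.IsSymmetric) :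
    ∃ R : MvPolynomial (Fin (a + b)) ℤ, R.IsSymmetric ∧
      algebraMap (MvPolynomial (Fin (a + b)) ℤ) (FractionRing (MvPolynomial (Fin (a + b)) ℤ)) R
        = ZS a b P Q := by
  classical
  obtain ⟨N, hN⟩ := ZSAux.exists_N a b P Q
  have hinj : Function.Injective (algebraMap (MvPolynomial (Fin (a + b)) ℤ)
      (FractionRing (MvPolynomial (Fin (a + b)) ℤ))) :=
    IsFractionRing.injective _ _
  have hanti : ∀ u v : Fin (a + b), u ≠ v → rename (Equiv.swap u v) N = -N := by
    intro u v huv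
    apply hinj
    rw [← ZSAux.fe_alg, hN, map_mul, ZSAux.fe_ZS a b _ P hP Q hQ, ZSAux.fe_alg,
      ZSAux.rename_vand, Equiv.Perm.sign_swap huv]
    rw [map_neg, hN]
    push_cast
    rw [neg_smul, one_smul, mul_neg]
  have hdvd : ∀ i j : Fin (a + b), i < j → (X j - X i : MvPolynomial (Fin (a + b)) ℤ) ∣ N := by
    intro i j hij
    apply ZSAux.dvd_of_subst_eq_zero i j
    have h1 : ZSAux.subst i j (rename (Equiv.swap i j) N) = ZSAux.subst i j N :=
      ZSAux.subst_rename_swap i j N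
    rw [hanti i j (ne_of_lt hij), map_neg] at h1
    have h2 : ZSAux.subst i j N + ZSAux.subst i j N = 0 := by linear_combination -h1
    exact add_self_eq_zero.1 h2
  obtain ⟨R, hR⟩ := ZSAux.vand_dvd N hdvd
  have hvandK : algebraMap (MvPolynomial (Fin (a + b)) ℤ)
      (FractionRing (MvPolynomial (Fin (a + b)) ℤ)) (ZSAux.vand (a + b)) ≠ 0 :=
    fun h => ZSAux.vand_ne_zero (a + b) (hinj (by rw [h, map_zero]))
  have halgR : algebraMap (MvPolynomial (Fin (a + b)) ℤ)
      (FractionRing (MvPolynomial (Fin (a + b)) ℤ)) R = ZS a b P Q := by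
    have hh : algebraMap (MvPolynomial (Fin (a + b)) ℤ)
          (FractionRing (MvPolynomial (Fin (a + b)) ℤ)) (ZSAux.vand (a + b))
          * algebraMap (MvPolynomial (Fin (a + b)) ℤ)
            (FractionRing (MvPolynomial (Fin (a + b)) ℤ)) R
        = algebraMap (MvPolynomial (Fin (a + b)) ℤ)
            (FractionRing (MvPolynomial (Fin (a + b)) ℤ)) (ZSAux.vand (a + b))
          * ZS a b P Q := by
      rw [← map_mul, ← hR, hN, mul_comm]
    exact mul_left_cancel₀ hvandK hh
  refine ⟨R, ?_, halgR⟩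
  intro σ
  apply hinj
  rw [← ZSAux.fe_alg, halgR, ZSAux.fe_ZS a b σ P hP Q hQ]

/-- For symmetric `P` in `a` variables and symmetric `Q` in `b` variables,
the element `Z(P,Q)` of the fraction field of `ℤ[x_1,…,x_{a+b}]` is (the image of) a
symmetric polynomial. -/
theorem ZS_is_polynomial (a b : ℕ) (ha : 1 ≤ a) (hb : 1 ≤ b)
    (P : MvPolynomial (Fin a) ℤ) (hP : P.IsSymmetric)
    (Q : MvPolynomial (Fin b) ℤ) (hQ : Q.IsSymmetric) :
    ∃ R : MvPolynomial (Fin (a + b)) ℤ, R.IsSymmetric ∧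
      algebraMap (MvPolynomial (Fin (a + b)) ℤ) (FractionRing (MvPolynomial (Fin (a + b)) ℤ)) R
        = ZS a b P Q :=
  ZS_is_polynomial' a b P hP Q hQ
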